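/- Let P be a d-dimensional perfect prismatoid in ℝ^d with facets F_1, ..., F_N, where for each i the facet F_i lies in the hyperplane {x : ⟨a_i, x⟩ = b_i} and P is contained in the half-space {x : ⟨a_i, x⟩ ≤ b_i}. Then there exist real numbers c_1, ..., c_N with c_i < b_i for all i such that P = {x ∈ ℝ^d : c_i ≤ ⟨a_i, x⟩ ≤ b_i for all i = 1, ..., N}, and for every vertex v of P and every i = 1, ..., N either ⟨a_i, v⟩ = b_i or ⟨a_i, v⟩ = c_i. -/

import Mathlib

open scoped RealInnerProductSpace

variable {d : ℕ}

local notation "E" => EuclideanSpace ℝ (Fin d)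





/-- Auxiliary: the hyperplane `{x | ⟪a, x⟫ = r}` as an affine subspace. -/
noncomputable def auxHyp (a : E) (r : ℝ) : AffineSubspace ℝ E where
  carrier := {x | ⟪a, x⟫ = r}
  smul_vsub_vadd_mem' c p1 p2 p3 h1 h2 h3 := by
    simp only [Set.mem_setOf_eq] at *
    simp [vsub_eq_sub, vadd_eq_add, inner_add_right, inner_smul_right, inner_sub_right,
      h1, h2, h3]

lemma aux_not_subset_hyp {P : Set E} (hspan : affineSpan ℝ P = ⊤) {a : E} (ha : a ≠ 0)
    {r : ℝ} (h : P ⊆ {x | ⟪a, x⟫ = r}) : False := by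
  have h1 : affineSpan ℝ P ≤ auxHyp a r := affineSpan_le.mpr h
  rw [hspan] at h1
  have h0 : (0 : E) ∈ auxHyp a r := h1 trivial
  have h2 : a ∈ auxHyp a r := h1 trivial
  have h0' : ⟪a, (0:E)⟫ = r := h0
  have h2' : ⟪a, a⟫ = r := h2
  rw [inner_zero_right] at h0'
  rw [← h0'] at h2'
  exact ha (inner_self_eq_zero.mp h2')

lemma aux_inner_vectorSpan {s : Set E} {a : E} {r : ℝ} (h : s ⊆ {x | ⟪a, x⟫ = r})
    {v : E} (hv : v ∈ vectorSpan ℝ s) : ⟪a, v⟫ = 0 := by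
  have : vectorSpan ℝ s ≤ LinearMap.ker ((innerSL ℝ a : E →L[ℝ] ℝ) : E →ₗ[ℝ] ℝ) := by
    rw [vectorSpan_def, Submodule.span_le]
    rintro v ⟨p, hp, q, hq, rfl⟩
    have hp' : ⟪a, p⟫ = r := h hp
    have hq' : ⟪a, q⟫ = r := h hq
    simp [LinearMap.mem_ker, vsub_eq_sub, inner_sub_right, hp', hq']
  simpa using this hv




lemma aux_interior_strict {P : Set E} {p : E} (hp : p ∈ interior P) {a : E} (ha : a ≠ 0)
    {b : ℝ} (h : P ⊆ {x | ⟪a, x⟫ ≤ b}) : ⟪a, p⟫ < b := by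
  obtain ⟨ε, hε, hball⟩ := Metric.isOpen_iff.mp isOpen_interior p hp
  have hna : (0:ℝ) < ‖a‖ := norm_pos_iff.mpr ha
  set q : E := p + (ε / (2 * ‖a‖)) • a with hq
  have hqball : q ∈ Metric.ball p ε := by
    rw [Metric.mem_ball, dist_eq_norm, hq]
    simp only [add_sub_cancel_left, norm_smul]
    rw [Real.norm_eq_abs, abs_of_pos (by positivity)]
    rw [div_mul_eq_mul_div, div_lt_iff₀ (by positivity)]
    nlinarith
  have hqP : q ∈ P := interior_subset (hball hqball)
  have := h hqP
  simp only [Set.mem_setOf_eq, hq, inner_add_right, real_inner_smul_right] at this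
  have haa : ⟪a, a⟫ = ‖a‖ ^ 2 := real_inner_self_eq_norm_sq a
  rw [haa] at this
  have : ⟪a, p⟫ + ε / (2 * ‖a‖) * ‖a‖ ^ 2 ≤ b := this
  have hpos : 0 < ε / (2 * ‖a‖) * ‖a‖ ^ 2 := by positivity
  linarith

lemma aux_affine_interior_empty (A : AffineSubspace ℝ E) (hA : A ≠ ⊤) :
    interior (A : Set E) = ∅ := by
  by_contra h
  obtain ⟨p, hp⟩ := Set.nonempty_iff_ne_empty.mpr h
  have : affineSpan ℝ (interior (A : Set E)) = ⊤ :=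
    isOpen_interior.affineSpan_eq_top ⟨p, hp⟩
  have hle : affineSpan ℝ (interior (A : Set E)) ≤ A :=
    affineSpan_le.mpr interior_subset
  rw [this] at hle
  exact hA (top_le_iff.mp hle)

lemma aux_avoid (𝒜 : Finset (Set E)) (h : ∀ A ∈ 𝒜, IsClosed A ∧ interior A = ∅) :
    ∀ U : Set E, IsOpen U → U.Nonempty → ∃ p ∈ U, ∀ A ∈ 𝒜, p ∉ A := by
  classical
  induction 𝒜 using Finset.induction_on with
  | empty => exact fun U _ hne => ⟨hne.choose, hne.choose_spec, by simp⟩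
  | @insert A 𝒜 hA ih =>
    intro U hU hne
    have hAcl := (h A (Finset.mem_insert_self _ _)).1
    have hAint := (h A (Finset.mem_insert_self _ _)).2
    have hU' : IsOpen (U \ A) := hU.sdiff hAcl
    have hne' : (U \ A).Nonempty := by
      rw [Set.nonempty_iff_ne_empty]
      intro hcontra
      have : U ⊆ A := by
        intro u hu
        by_contra hua
        exact (Set.eq_empty_iff_forall_notMem.mp hcontra u) ⟨hu, hua⟩
      have : U ⊆ interior A := hU.subset_interior_iff.mpr this
      rw [hAint] at this
      exact Set.not_nonempty_empty ⟨hne.choose, this hne.choose_spec⟩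
    obtain ⟨p, hpU, hp⟩ := ih (fun B hB => h B (Finset.mem_insert_of_mem hB)) (U \ A) hU' hne'
    refine ⟨p, hpU.1, ?_⟩
    intro B hB
    rcases Finset.mem_insert.mp hB with rfl | hB
    · exact hpU.2
    · exact hp B hB




lemma aux_insert_span {T : Set E} (hT : T.Nonempty) {x : E}
    (h : affineSpan ℝ (insert x T) = ⊤) :
    d ≤ Module.finrank ℝ (vectorSpan ℝ T) + 1 := by
  obtain ⟨t₀, ht₀⟩ := hT
  have h1 : vectorSpan ℝ (insert x T) =
      Submodule.span ℝ ((· -ᵥ t₀) '' insert x T) :=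
    vectorSpan_eq_span_vsub_set_right ℝ (Set.mem_insert_of_mem _ ht₀)
  have h2 : vectorSpan ℝ T = Submodule.span ℝ ((· -ᵥ t₀) '' T) :=
    vectorSpan_eq_span_vsub_set_right ℝ ht₀
  rw [Set.image_insert_eq, Submodule.span_insert] at h1
  have hfr : Module.finrank ℝ (vectorSpan ℝ (insert x T)) = d := by
    have := direction_affineSpan ℝ (insert x T)
    rw [h, AffineSubspace.direction_top] at this
    rw [← this, finrank_top, finrank_euclideanSpace_fin]
  have hle : Module.finrank ℝ (vectorSpan ℝ (insert x T)) ≤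
      Module.finrank ℝ (Submodule.span ℝ {x -ᵥ t₀}) +
      Module.finrank ℝ (vectorSpan ℝ T) := by
    rw [h1, h2]
    have := Submodule.finrank_sup_add_finrank_inf_eq
      (Submodule.span ℝ {x -ᵥ t₀}) (Submodule.span ℝ ((· -ᵥ t₀) '' T))
    omega
  have hsing : Module.finrank ℝ (Submodule.span ℝ ({x -ᵥ t₀} : Set E)) ≤ 1 := by
    by_cases hxz : x -ᵥ t₀ = 0
    · rw [hxz, Submodule.span_zero_singleton]
      simp
    · rw [finrank_span_singleton hxz]
  omega

lemma aux_max_principle (S : Finset E) (f : E →L[ℝ] ℝ) (M : ℝ)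
    (hle : ∀ s ∈ S, f s ≤ M) {z : E} (hz : z ∈ convexHull ℝ (S : Set E))
    (hfz : f z = M) :
    z ∈ convexHull ℝ ((S.filter (fun s => f s = M) : Finset E) : Set E) := by
  classical
  rw [Finset.convexHull_eq] at hz
  obtain ⟨w, hw0, hw1, hwz⟩ := hz
  have hzsum : z = ∑ y ∈ S, w y • y := by
    rw [← hwz, Finset.centerMass_eq_of_sum_1 _ _ hw1]
    rfl
  have hfsum : ∑ y ∈ S, w y * f y = M := by
    rw [← hfz, hzsum, map_sum]
    simp [map_smul, smul_eq_mul]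
  have hkey : ∀ y ∈ S, w y * (M - f y) = 0 := by
    have hsum0 : ∑ y ∈ S, w y * (M - f y) = 0 := by
      have : ∑ y ∈ S, w y * M = M := by
        rw [← Finset.sum_mul, hw1, one_mul]
      calc ∑ y ∈ S, w y * (M - f y) = ∑ y ∈ S, (w y * M - w y * f y) := by
            congr 1; ext y; ring
        _ = (∑ y ∈ S, w y * M) - ∑ y ∈ S, w y * f y := Finset.sum_sub_distrib _ _
        _ = 0 := by rw [this, hfsum, sub_self]
    intro y hy
    have hnn : ∀ y ∈ S, 0 ≤ w y * (M - f y) := fun y hy =>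
      mul_nonneg (hw0 y hy) (sub_nonneg.mpr (hle y hy))
    exact (Finset.sum_eq_zero_iff_of_nonneg hnn).mp hsum0 y hy
  have hw0' : ∀ y ∈ S, y ∉ S.filter (fun s => f s = M) → w y = 0 := by
    intro y hy hyf
    have : ¬ f y = M := by
      intro hfy
      exact hyf (Finset.mem_filter.mpr ⟨hy, hfy⟩)
    have := hkey y hy
    rcases mul_eq_zero.mp this with h | h
    · exact h
    · exact absurd (by linarith [sub_eq_zero.mp h] : f y = M) ‹¬ f y = M›
  rw [Finset.convexHull_eq]
  refine ⟨w, fun y hy => hw0 y (Finset.mem_filter.mp hy).1, ?_, ?_⟩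
  · rw [Finset.sum_subset (Finset.filter_subset _ _) (fun y hy hyn => hw0' y hy hyn)]
    exact hw1
  · rw [Finset.centerMass_subset _ (Finset.filter_subset _ _) (fun y hy hyn => hw0' y hy hyn)]
    exact hwz


/-- A polytope is the convex hull of a finite set of points. -/
def IsPolytope {d : ℕ} (P : Set (EuclideanSpace ℝ (Fin d))) : Prop :=
  ∃ S : Finset (EuclideanSpace ℝ (Fin d)),
    P = convexHull ℝ (S : Set (EuclideanSpace ℝ (Fin d)))

/-- A facet of a `d`-dimensional polytope is a `(d-1)`-dimensional exposed face. -/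
def IsFacet {d : ℕ} (P F : Set (EuclideanSpace ℝ (Fin d))) : Prop :=
  IsExposed ℝ P F ∧ Module.finrank ℝ (vectorSpan ℝ F) = d - 1

/-- A `d`-dimensional polytope `P` in `ℝ^d` is a perfect prismatoid if for every facet `F`
there is a (nonempty exposed) face `F'` parallel to `F` (i.e. `lin F' ⊆ lin F`) such that
`P = conv (F ∪ F')`. -/
def IsPerfectPrismatoid {d : ℕ} (P : Set (EuclideanSpace ℝ (Fin d))) : Prop :=
  IsPolytope P ∧ affineSpan ℝ P = ⊤ ∧
  ∀ F : Set (EuclideanSpace ℝ (Fin d)), IsFacet P F →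
    ∃ F' : Set (EuclideanSpace ℝ (Fin d)), IsExposed ℝ P F' ∧ F'.Nonempty ∧
      vectorSpan ℝ F' ≤ vectorSpan ℝ F ∧ P = convexHull ℝ (F ∪ F')

/-- Key lemma: a full-dimensional polytope contains the intersection of the half-spaces
determined by (a list containing all of) its facets. -/
lemma aux_halfspace_subset {N : ℕ} {P : Set E} (hpoly : IsPolytope P)
    (hspan : affineSpan ℝ P = ⊤)
    (F : Fin N → Set E) (a : Fin N → E) (b : Fin N → ℝ) (ha : ∀ i, a i ≠ 0)
    (hFhyp : ∀ i, F i ⊆ {x | ⟪a i, x⟫ = b i})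
    (hPhalf : ∀ i, P ⊆ {x | ⟪a i, x⟫ ≤ b i})
    (hall : ∀ G : Set E, IsFacet P G → ∃ i, G = F i) :
    {x : E | ∀ i, ⟪a i, x⟫ ≤ b i} ⊆ P := by
  classical
  obtain ⟨S, hS⟩ := hpoly
  have hPconv : Convex ℝ P := hS ▸ convex_convexHull ℝ _
  have hPcomp : IsCompact P := hS ▸ S.finite_toSet.isCompact_convexHull ℝ
  have hPclosed : IsClosed P := hPcomp.isClosed
  intro x hx
  by_contra hxP
  -- interior is nonempty
  obtain ⟨p₀, hp₀⟩ := hPconv.interior_nonempty_iff_affineSpan_eq_top.mpr hspan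
  -- choose a generic interior point avoiding bad affine subspaces
  set ℬ : Finset (Finset E) :=
    S.powerset.filter (fun T => affineSpan ℝ (insert x (T : Set E)) ≠ ⊤) with hℬ
  set 𝒜 : Finset (Set E) :=
    ℬ.image (fun T : Finset E => ((affineSpan ℝ (insert x (T : Set E)) : AffineSubspace ℝ E) : Set E))
    with h𝒜
  have h𝒜prop : ∀ A ∈ 𝒜, IsClosed A ∧ interior A = ∅ := by
    intro A hA
    rw [h𝒜, Finset.mem_image] at hA
    obtain ⟨T, hT, rfl⟩ := hA
    rw [hℬ, Finset.mem_filter] at hT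
    exact ⟨(affineSpan ℝ (insert x (T : Set E))).closed_of_finiteDimensional,
      aux_affine_interior_empty _ hT.2⟩
  obtain ⟨p, hp, hpavoid⟩ := aux_avoid 𝒜 h𝒜prop (interior P) isOpen_interior ⟨p₀, hp₀⟩
  have hpP : p ∈ P := interior_subset hp
  -- the exit point
  have hxp : x ≠ p := fun h => hxP (h ▸ hpP)
  set σ : ℝ → E := fun t => p + t • (x - p) with hσ
  have hσcont : Continuous σ := by fun_prop
  set K : Set ℝ := Set.Icc (0:ℝ) 1 ∩ σ ⁻¹' P with hK
  have hKcomp : IsCompact K :=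
    isCompact_Icc.of_isClosed_subset (isClosed_Icc.inter (hPclosed.preimage hσcont))
      Set.inter_subset_left
  have hK0 : (0:ℝ) ∈ K := by
    constructor
    · exact ⟨le_refl 0, zero_le_one⟩
    · show σ 0 ∈ P
      simp only [hσ, zero_smul, add_zero]
      exact hpP
  have hKne : K.Nonempty := ⟨0, hK0⟩
  set t₁ : ℝ := sSup K with ht₁
  have ht₁K : t₁ ∈ K := hKcomp.sSup_mem hKne
  have hzP : σ t₁ ∈ P := ht₁K.2
  set z : E := σ t₁ with hzdef
  have ht₁0 : 0 ≤ t₁ := ht₁K.1.1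
  have ht₁1 : t₁ ≤ 1 := ht₁K.1.2
  have ht₁ne1 : t₁ ≠ 1 := by
    intro h
    apply hxP
    have : σ 1 = x := by simp [hσ]
    rw [← this, ← h]
    exact hzP
  have ht₁lt1 : t₁ < 1 := lt_of_le_of_ne ht₁1 ht₁ne1
  have hznotint : z ∉ interior P := by
    intro hzint
    obtain ⟨δ, hδ, hball⟩ := Metric.isOpen_iff.mp (isOpen_interior.preimage hσcont) t₁
      (by rwa [Set.mem_preimage])
    set t' : ℝ := min (t₁ + δ / 2) ((t₁ + 1) / 2) with ht'
    have ht'gt : t₁ < t' := by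
      apply lt_min <;> linarith
    have ht'le1 : t' ≤ 1 := le_trans (min_le_right _ _) (by linarith)
    have ht'ball : t' ∈ Metric.ball t₁ δ := by
      rw [Metric.mem_ball, Real.dist_eq, abs_of_pos (by linarith)]
      calc t' - t₁ ≤ (t₁ + δ / 2) - t₁ := by
            have := min_le_left (t₁ + δ / 2) ((t₁ + 1) / 2); linarith
        _ < δ := by linarith
    have ht'K : t' ∈ K := by
      refine ⟨⟨by linarith, ht'le1⟩, ?_⟩
      have h1 : t' ∈ σ ⁻¹' interior P := hball ht'ball
      exact Set.mem_preimage.mpr (interior_subset (Set.mem_preimage.mp h1))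
    have : t' ≤ t₁ := le_csSup (hKcomp.bddAbove) ht'K
    linarith
  have ht₁pos : t₁ ≠ 0 := by
    intro h
    apply hznotint
    have : z = p := by simp [hzdef, hσ, h]
    rw [this]; exact hp
  -- separating functional
  obtain ⟨f, hf⟩ := geometric_hahn_banach_open_point (hPconv.interior) isOpen_interior hznotint
  have hfP : ∀ y ∈ P, f y ≤ f z := by
    intro y hy
    have hseq : ∀ t ∈ Set.Ioo (0:ℝ) 1, f ((1 - t) • p + t • y) < f z := by
      intro t ht
      exact hf _ (hPconv.combo_interior_closure_mem_interior hp (subset_closure hy)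
        (by linarith [ht.2]) ht.1.le (by ring))
    have hcont : Continuous (fun t : ℝ => f ((1 - t) • p + t • y)) := by fun_prop
    have htend : Filter.Tendsto (fun t : ℝ => f ((1 - t) • p + t • y))
        (nhdsWithin 1 (Set.Iio 1)) (nhds (f y)) := by
      have h1 : f ((1 - (1:ℝ)) • p + (1:ℝ) • y) = f y := by norm_num
      have := hcont.tendsto (1:ℝ)
      rw [h1] at this
      exact this.mono_left nhdsWithin_le_nhds
    refine le_of_tendsto htend ?_
    filter_upwards [Ioo_mem_nhdsLT_of_mem (Set.mem_Ioc.mpr ⟨zero_lt_one, le_refl (1:ℝ)⟩)]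
      with t ht using (hseq t ht).le
  have hfp : f p < f z := hf p hp
  have hfne : f ≠ 0 := by
    intro h
    rw [h] at hfp
    simp at hfp
  -- the exposed face
  set M : ℝ := f z with hM
  set T : Finset E := S.filter (fun s => f s = M) with hT
  have hSP : (S : Set E) ⊆ P := hS ▸ subset_convexHull ℝ _
  have hzT : z ∈ convexHull ℝ (T : Set E) := by
    apply aux_max_principle S f M (fun s hs => hfP s (hSP hs)) (hS ▸ hzP) rfl
  have hTne : (T : Set E).Nonempty := by
    rcases Set.eq_empty_or_nonempty (T : Set E) with h | h
    · rw [h, convexHull_empty] at hzT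
      exact absurd hzT (Set.notMem_empty z)
    · exact h
  -- genericity gives fullness of the span with x
  have htop : affineSpan ℝ (insert x (T : Set E)) = ⊤ := by
    by_contra hne
    have hTℬ : T ∈ ℬ := by
      rw [hℬ, Finset.mem_filter]
      exact ⟨Finset.mem_powerset.mpr (Finset.filter_subset _ _), hne⟩
    have hA𝒜 : ((affineSpan ℝ (insert x (T : Set E)) : AffineSubspace ℝ E) : Set E) ∈ 𝒜 :=
      Finset.mem_image_of_mem _ hTℬ
    apply hpavoid _ hA𝒜
    -- p lies in this affine span
    have hzmem : z ∈ affineSpan ℝ (insert x (T : Set E)) :=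
      affineSpan_mono ℝ (Set.subset_insert _ _) (convexHull_subset_affineSpan _ hzT)
    have hxmem : x ∈ affineSpan ℝ (insert x (T : Set E)) :=
      subset_affineSpan ℝ _ (Set.mem_insert _ _)
    have key : (1 - t₁)⁻¹ • (z -ᵥ x) +ᵥ x = p := by
      have hz_x : z -ᵥ x = (1 - t₁) • (p - x) := by
        simp only [hzdef, hσ, vsub_eq_sub]
        module
      rw [hz_x, smul_smul, inv_mul_cancel₀ (by linarith : (1:ℝ) - t₁ ≠ 0), one_smul]
      simp [vadd_eq_add]
    rw [← key]
    exact AffineSubspace.smul_vsub_vadd_mem _ _ hzmem hxmem hxmem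
  have hd : d ≤ Module.finrank ℝ (vectorSpan ℝ (T : Set E)) + 1 := aux_insert_span hTne htop
  -- the exposed face E' is a facet
  set E' : Set E := {y ∈ P | f y = M} with hE'
  have hzE' : z ∈ E' := ⟨hzP, rfl⟩
  have hexp : IsExposed ℝ P E' := by
    intro _
    refine ⟨f, ?_⟩
    ext y
    constructor
    · rintro ⟨hyP, hyM⟩
      exact ⟨hyP, fun w hw => hyM ▸ hfP w hw⟩
    · rintro ⟨hyP, hy⟩
      exact ⟨hyP, le_antisymm (hfP y hyP) (hy z hzP)⟩
  have hkerrank : Module.finrank ℝ (LinearMap.ker (f : E →ₗ[ℝ] ℝ)) = d - 1 := by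
    have hrk := LinearMap.finrank_range_add_finrank_ker (f : E →ₗ[ℝ] ℝ)
    have hrange : LinearMap.range (f : E →ₗ[ℝ] ℝ) = ⊤ := by
      rw [LinearMap.range_eq_top]
      intro c
      obtain ⟨u, hu⟩ : ∃ u, f u ≠ 0 := by
        by_contra h
        push_neg at h
        exact hfne (by ext v; simp [h v])
      exact ⟨(c / f u) • u, by simp [map_smul]; field_simp⟩
    rw [hrange, finrank_top, finrank_euclideanSpace_fin] at hrk
    have : Module.finrank ℝ ℝ = 1 := Module.finrank_self ℝ
    omega
  have hE'ker : vectorSpan ℝ E' ≤ LinearMap.ker (f : E →ₗ[ℝ] ℝ) := by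
    rw [vectorSpan_def, Submodule.span_le]
    rintro v ⟨q1, hq1, q2, hq2, rfl⟩
    simp only [SetLike.mem_coe, LinearMap.mem_ker, vsub_eq_sub]
    rw [ContinuousLinearMap.coe_coe, map_sub, hq1.2, hq2.2, sub_self]
  have hTE' : (T : Set E) ⊆ E' := by
    intro s hs
    rw [hT] at hs
    simp only [Finset.coe_filter, Set.mem_setOf_eq] at hs
    exact ⟨hSP hs.1, hs.2⟩
  have hfrE' : Module.finrank ℝ (vectorSpan ℝ E') = d - 1 := by
    have h1 : Module.finrank ℝ (vectorSpan ℝ E') ≤ d - 1 :=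
      hkerrank ▸ Submodule.finrank_mono hE'ker
    have h2 : Module.finrank ℝ (vectorSpan ℝ (T : Set E)) ≤
        Module.finrank ℝ (vectorSpan ℝ E') :=
      Submodule.finrank_mono (vectorSpan_mono ℝ hTE')
    omega
  obtain ⟨i, hi⟩ := hall E' ⟨hexp, hfrE'⟩
  -- contradiction
  have hzval : ⟪a i, z⟫ = b i := hFhyp i (hi ▸ hzE')
  have hpval : ⟪a i, p⟫ < b i := aux_interior_strict hp (ha i) (hPhalf i)
  have hxval : ⟪a i, x⟫ ≤ b i := hx i
  have hzeq : ⟪a i, z⟫ = ⟪a i, p⟫ + t₁ * (⟪a i, x⟫ - ⟪a i, p⟫) := by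
    simp only [hzdef, hσ, inner_add_right, real_inner_smul_right, inner_sub_right]
  rw [hzval] at hzeq
  nlinarith [mul_pos (sub_pos.mpr hpval) (by linarith : (0:ℝ) < 1 - t₁),
    mul_le_mul_of_nonneg_left (sub_nonneg.mpr hxval) ht₁0]

/-- A perfect prismatoid with facets `F i ⊆ {x | ⟪a i, x⟫ = b i}` can be
written as `{x | ∀ i, c i ≤ ⟪a i, x⟫ ≤ b i}` with `c i < b i`, and every vertex `v`
satisfies `⟪a i, v⟫ ∈ {b i, c i}` for every `i`. -/
theorem perfect_prismatoid_description {d N : ℕ}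
    (P : Set (EuclideanSpace ℝ (Fin d))) (hP : IsPerfectPrismatoid P)
    (F : Fin N → Set (EuclideanSpace ℝ (Fin d)))
    (a : Fin N → EuclideanSpace ℝ (Fin d)) (b : Fin N → ℝ)
    (ha : ∀ i, a i ≠ 0)
    (hF : ∀ i, IsFacet P (F i))
    (hFhyp : ∀ i, F i ⊆ {x | ⟪a i, x⟫ = b i})
    (hPhalf : ∀ i, P ⊆ {x | ⟪a i, x⟫ ≤ b i})
    (hall : ∀ G : Set (EuclideanSpace ℝ (Fin d)), IsFacet P G → ∃ i, G = F i) :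
    ∃ c : Fin N → ℝ, (∀ i, c i < b i) ∧
      P = {x | ∀ i, c i ≤ ⟪a i, x⟫ ∧ ⟪a i, x⟫ ≤ b i} ∧
      ∀ v ∈ Set.extremePoints ℝ P, ∀ i, ⟪a i, v⟫ = b i ∨ ⟪a i, v⟫ = c i := by
  classical
  obtain ⟨hpoly, hspan, hpris⟩ := hP
  choose F' hexp hne hsub hconv using fun i => hpris (F i) (hF i)
  choose y hy using hne
  set c : Fin N → ℝ := fun i => ⟪a i, y i⟫ with hc
  have hconst : ∀ i, ∀ w ∈ F' i, ⟪a i, w⟫ = c i := by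
    intro i w hw
    have hv : w -ᵥ y i ∈ vectorSpan ℝ (F i) := hsub i (vsub_mem_vectorSpan ℝ hw (hy i))
    have h0 := aux_inner_vectorSpan (hFhyp i) hv
    simp only [vsub_eq_sub, inner_sub_right] at h0
    have : c i = ⟪a i, y i⟫ := rfl
    linarith
  have hF'P : ∀ i, F' i ⊆ P := fun i => (hexp i).subset
  have hcb : ∀ i, c i ≤ b i := fun i => hPhalf i (hF'P i (hy i))
  have hclt : ∀ i, c i < b i := by
    intro i
    rcases lt_or_eq_of_le (hcb i) with h | h
    · exact h
    · exfalso
      apply aux_not_subset_hyp hspan (ha i) (r := b i)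
      rw [hconv i]
      have hcvx : Convex ℝ {x : EuclideanSpace ℝ (Fin d) | ⟪a i, x⟫ = b i} :=
        (auxHyp (a i) (b i)).convex
      apply convexHull_min _ hcvx
      rintro w (hw | hw)
      · exact hFhyp i hw
      · show ⟪a i, w⟫ = b i
        rw [hconst i w hw, ← h]
  have hPsub : P ⊆ {x | ∀ i, c i ≤ ⟪a i, x⟫ ∧ ⟪a i, x⟫ ≤ b i} := by
    intro x hxp i
    have hxi : x ∈ convexHull ℝ (F i ∪ F' i) := (hconv i) ▸ hxp
    have hlin : IsLinearMap ℝ (fun x : EuclideanSpace ℝ (Fin d) => ⟪a i, x⟫) :=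
      ⟨fun u v => inner_add_right _ _ _, fun r u => real_inner_smul_right _ _ _⟩
    have hslab : Convex ℝ {x : EuclideanSpace ℝ (Fin d) |
        c i ≤ ⟪a i, x⟫ ∧ ⟪a i, x⟫ ≤ b i} := by
      have h1 := convex_halfSpace_ge hlin (c i)
      have h2 := convex_halfSpace_le hlin (b i)
      have : {x : EuclideanSpace ℝ (Fin d) | c i ≤ ⟪a i, x⟫ ∧ ⟪a i, x⟫ ≤ b i} =
          {x | c i ≤ ⟪a i, x⟫} ∩ {x | ⟪a i, x⟫ ≤ b i} := rfl
      rw [this]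
      exact h1.inter h2
    refine convexHull_min ?_ hslab hxi
    rintro w (hw | hw)
    · exact ⟨(hFhyp i hw) ▸ hcb i, le_of_eq (hFhyp i hw)⟩
    · exact ⟨le_of_eq (hconst i w hw).symm, (hconst i w hw) ▸ hcb i⟩
  refine ⟨c, hclt, ?_, ?_⟩
  · apply Set.Subset.antisymm hPsub
    intro x hx
    exact aux_halfspace_subset hpoly hspan F a b ha hFhyp hPhalf hall (fun i => (hx i).2)
  · intro v hv i
    have hv' : v ∈ F i ∪ F' i := by
      rw [hconv i] at hv
      exact extremePoints_convexHull_subset hv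
    rcases hv' with h | h
    · exact Or.inl (hFhyp i h)
    · exact Or.inr (hconst i v h)
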